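/- Let w be a preregular m-linear form on V with twisting element Q having matrix components Q^μ_ν in a basis (e_λ), and let w̃ ∈ V^{⊗m} satisfy Σ w̃^{μ λ₁...λ_{m-1}} w_{λ₁...λ_{m-1} ν} = δ^μ_ν. Then Σ w̃^{μ λ₁...λ_{m-1}} w_{ν λ₁...λ_{m-1}} = (Q^{-1})^μ_ν for all μ, ν. -/
import Mathlib


/-- For a preregular form `w` with twisting element `Q` and any polar
element `w̃` (with `Σ w̃^{μλ₁…λ_{M-1}} w_{λ₁…λ_{M-1}ν} = δ^μ_ν`), one has
`Σ w̃^{μλ₁…λ_{M-1}} w_{νλ₁…λ_{M-1}} = (Q⁻¹)^μ_ν`. -/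
theorem stmt_6 {K : Type*} [Field K] {n m : ℕ} (hn : 2 ≤ n) (hm : 1 ≤ m)
    (w : MultilinearMap K (fun _ : Fin (m + 1) => (Fin n → K)) K)
    (hnd : ∀ X : Fin n → K,
      (∀ Y : Fin m → (Fin n → K), w (Fin.snoc Y X) = 0) → X = 0)
    (Q : (Fin n → K) ≃ₗ[K] (Fin n → K))
    (hQ : ∀ X : Fin (m + 1) → (Fin n → K),
      w X = w (Fin.cons (Q (X (Fin.last m))) (Fin.init X)))
    (wt : (Fin (m + 1) → Fin n) → K)
    (hwt : ∀ μ ν : Fin n,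
      ∑ l : Fin m → Fin n,
        wt (Fin.cons μ l) *
          w (Fin.snoc (fun i => Pi.single (l i) (1 : K)) (Pi.single ν (1 : K)))
        = if μ = ν then 1 else 0) :
    ∀ μ ν : Fin n,
      ∑ l : Fin m → Fin n,
        wt (Fin.cons μ l) *
          w (Fin.cons (Pi.single ν (1 : K)) (fun i => Pi.single (l i) (1 : K)))
        = Q.symm (Pi.single ν (1 : K)) μ := by
  intro μ ν
  set v : Fin n → K := Q.symm (Pi.single ν (1 : K)) with hv
  have key : ∀ l : Fin m → Fin n,
      w (Fin.cons (Pi.single ν (1 : K)) (fun i => Pi.single (l i) (1 : K)))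
        = w (Fin.snoc (fun i => Pi.single (l i) (1 : K)) v) := by
    intro l
    rw [hQ (Fin.snoc (fun i => Pi.single (l i) (1 : K)) v)]
    rw [Fin.snoc_last, Fin.init_snoc, hv, Q.apply_symm_apply]
  have hvsum : v = ∑ k, v k • (Pi.single k (1 : K) : Fin n → K) := by funext j; simp [Pi.single_apply, eq_comm]
  have expand : ∀ l : Fin m → Fin n,
      w (Fin.snoc (fun i => Pi.single (l i) (1 : K)) v)
        = ∑ k, v k * w (Fin.snoc (fun i => Pi.single (l i) (1 : K))
            (Pi.single k (1 : K))) := by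
    intro l
    have h1 : (Fin.snoc (fun i => Pi.single (l i) (1 : K)) v :
        Fin (m + 1) → Fin n → K)
        = Function.update (Fin.snoc (fun i => Pi.single (l i) (1 : K)) v)
            (Fin.last m) (∑ k, v k • (Pi.single k (1 : K) : Fin n → K)) := by
      rw [Fin.update_snoc_last, ← hvsum]
    rw [h1, w.map_update_sum]
    refine Finset.sum_congr rfl fun k _ => ?_
    rw [w.map_update_smul, Fin.update_snoc_last, smul_eq_mul]
  simp only [key, expand, Finset.mul_sum]
  rw [Finset.sum_comm]
  have : ∀ k : Fin n,
      (∑ l : Fin m → Fin n, wt (Fin.cons μ l) *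
        (v k * w (Fin.snoc (fun i => Pi.single (l i) (1 : K))
          (Pi.single k (1 : K)))))
      = v k * (if μ = k then 1 else 0) := by
    intro k
    rw [← hwt μ k, Finset.mul_sum]
    exact Finset.sum_congr rfl fun l _ => by ring
  simp only [this, mul_ite, mul_one, mul_zero]
  simp
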